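/- Let M = (M(α), M(β)) be a representation of the Kronecker quiver with M(α), M(β) ∈ Mat_{d_2,d_1}(k). For n ≥ 1, dim Hom(I_n, M) = n·d_1 - rank I_n(M), where I_n is the preinjective Kronecker representation ([E_{n-1}, 0], [0, E_{n-1}]) with dimension vector (n, n-1), and I_n(M) is the (n+1)×n block matrix with M(β) on the block diagonal and M(α) on the block subdiagonal. -/

import Mathlib

/-- `[E_{n-1}, 0]`: the `(n-1) × n` matrix defining the arrow `α` of the preinjective
Kronecker representation `I_n`. -/
def preinjA {k : Type} [Field k] (n : ℕ) : Matrix (Fin (n - 1)) (Fin n) k :=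
  fun i j => if (i : ℕ) = (j : ℕ) then 1 else 0

/-- `[0, E_{n-1}]`: the `(n-1) × n` matrix defining the arrow `β` of the preinjective
Kronecker representation `I_n`. -/
def preinjB {k : Type} [Field k] (n : ℕ) : Matrix (Fin (n - 1)) (Fin n) k :=
  fun i j => if (i : ℕ) + 1 = (j : ℕ) then 1 else 0

/-- The space of morphisms of Kronecker representations `I_n → M`: pairs `(X, Y)` with
`M(α) X = Y I_n(α)` and `M(β) X = Y I_n(β)`. -/
def homFromPreinj {k : Type} [Field k] (d1 d2 n : ℕ)
    (Mα Mβ : Matrix (Fin d2) (Fin d1) k) :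
    Submodule k (Matrix (Fin d1) (Fin n) k × Matrix (Fin d2) (Fin (n - 1)) k) where
  carrier := {p | Mα * p.1 = p.2 * preinjA n ∧ Mβ * p.1 = p.2 * preinjB n}
  add_mem' := by
    rintro x y ⟨hx1, hx2⟩ ⟨hy1, hy2⟩
    constructor <;> simp only [Prod.fst_add, Prod.snd_add, Matrix.mul_add,
      Matrix.add_mul, hx1, hx2, hy1, hy2]
    all_goals exact (Matrix.add_mul _ _ _).symm
  zero_mem' := by
    simp
    exact ⟨(Matrix.zero_mul _).symm, (Matrix.zero_mul _).symm⟩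
  smul_mem' := by
    rintro c x ⟨hx1, hx2⟩
    constructor <;> simp only [Prod.smul_fst, Prod.smul_snd, Matrix.mul_smul,
      Matrix.smul_mul, hx1, hx2]
    all_goals exact (Matrix.smul_mul _ _ _).symm

/-- The block matrix `I_n(M)` with `n + 1` block rows and `n` block columns, with
`M(β)` on the block diagonal and `M(α)` on the block subdiagonal. -/
def preinjBlockMat {k : Type} [Field k] (d1 d2 : ℕ) (Mα Mβ : Matrix (Fin d2) (Fin d1) k)
    (n : ℕ) : Matrix (Fin (n + 1) × Fin d2) (Fin n × Fin d1) k :=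
  fun rp cq =>
    if (rp.1 : ℕ) = (cq.1 : ℕ) then Mβ rp.2 cq.2
    else if (rp.1 : ℕ) = (cq.1 : ℕ) + 1 then Mα rp.2 cq.2 else 0

section Aux
variable {k : Type} [Field k]

lemma sum_ite_eq_fin {m : ℕ} (f : Fin m → k) (t : ℕ) :
    (∑ j : Fin m, if t = (j : ℕ) then f j else 0) =
      if h : t < m then f ⟨t, h⟩ else 0 := by
  split_ifs with h
  · rw [Finset.sum_eq_single (⟨t, h⟩ : Fin m)]
    · simp
    · intro j _ hj
      rw [if_neg]
      intro he
      exact hj (Fin.ext he.symm)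
    · simp
  · apply Finset.sum_eq_zero
    intro j _
    rw [if_neg]
    omega

lemma sum_ite_eq_fin' {m : ℕ} (f : Fin m → k) (t : ℕ) :
    (∑ j : Fin m, if (j : ℕ) = t then f j else 0) =
      if h : t < m then f ⟨t, h⟩ else 0 := by
  rw [← sum_ite_eq_fin]
  apply Finset.sum_congr rfl; intro j _; exact if_congr eq_comm rfl rfl

lemma sum_ite_succ_fin {m : ℕ} (f : Fin m → k) (t : ℕ) :
    (∑ j : Fin m, if t = (j : ℕ) + 1 then f j else 0) =
      if h : 0 < t ∧ t - 1 < m then f ⟨t - 1, h.2⟩ else 0 := by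
  split_ifs with h
  · rw [Finset.sum_eq_single (⟨t - 1, h.2⟩ : Fin m)]
    · have ht : t - 1 + 1 = t := by omega
      simp [ht]
    · intro j _ hj
      rw [if_neg]
      intro he
      apply hj
      apply Fin.ext
      simp only []
      omega
    · simp
  · apply Finset.sum_eq_zero
    intro j _
    rw [if_neg]
    omega

lemma sum_ite_succ_fin' {m : ℕ} (f : Fin m → k) (t : ℕ) :
    (∑ j : Fin m, if (j : ℕ) + 1 = t then f j else 0) =
      if h : 0 < t ∧ t - 1 < m then f ⟨t - 1, h.2⟩ else 0 := by
  rw [← sum_ite_succ_fin]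
  apply Finset.sum_congr rfl; intro j _; exact if_congr eq_comm rfl rfl

lemma mulA_entry {d2 n : ℕ} (Y : Matrix (Fin d2) (Fin (n - 1)) k) (r : Fin d2) (j : Fin n) :
    (Y * preinjA n : Matrix (Fin d2) (Fin n) k) r j = if h : (j : ℕ) < n - 1 then Y r ⟨j, h⟩ else 0 := by
  change (∑ j' : Fin (n-1), Y r j' * preinjA n j' j) = _
  rw [show (∑ j' : Fin (n-1), Y r j' * preinjA n j' j)
      = ∑ j' : Fin (n-1), if (j' : ℕ) = (j : ℕ) then Y r j' else 0 by
    apply Finset.sum_congr rfl; intro j' _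
    simp [preinjA, mul_ite]]
  rw [sum_ite_eq_fin']

lemma mulB_entry {d2 n : ℕ} (Y : Matrix (Fin d2) (Fin (n - 1)) k) (r : Fin d2) (j : Fin n) :
    (Y * preinjB n : Matrix (Fin d2) (Fin n) k) r j =
      if h : 0 < (j : ℕ) ∧ (j : ℕ) - 1 < n - 1 then Y r ⟨(j : ℕ) - 1, h.2⟩ else 0 := by
  change (∑ j' : Fin (n-1), Y r j' * preinjB n j' j) = _
  rw [show (∑ j' : Fin (n-1), Y r j' * preinjB n j' j)
      = ∑ j' : Fin (n-1), if (j' : ℕ) + 1 = (j : ℕ) then Y r j' else 0 by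
    apply Finset.sum_congr rfl; intro j' _
    simp [preinjB, mul_ite]]
  rw [sum_ite_succ_fin']

lemma blockMulVec_entry {d1 d2 n : ℕ} (Mα Mβ : Matrix (Fin d2) (Fin d1) k)
    (v : Fin n × Fin d1 → k) (i : Fin (n + 1)) (r : Fin d2) :
    (preinjBlockMat d1 d2 Mα Mβ n).mulVec v (i, r) =
      (if h : (i : ℕ) < n then ∑ c, Mβ r c * v (⟨i, h⟩, c) else 0) +
      (if h : 0 < (i : ℕ) ∧ (i : ℕ) - 1 < n then ∑ c, Mα r c * v (⟨(i : ℕ) - 1, h.2⟩, c) else 0) := by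
  rw [Matrix.mulVec, dotProduct]
  rw [Fintype.sum_prod_type]
  rw [show (∑ j : Fin n, ∑ c : Fin d1, preinjBlockMat d1 d2 Mα Mβ n (i, r) (j, c) * v (j, c))
      = ∑ j : Fin n, ((if (i:ℕ) = (j:ℕ) then ∑ c, Mβ r c * v (j, c) else 0)
          + (if (i:ℕ) = (j:ℕ) + 1 then ∑ c, Mα r c * v (j, c) else 0)) by
    apply Finset.sum_congr rfl; intro j _
    by_cases h1 : (i:ℕ) = (j:ℕ)
    · have h2 : ¬ (i:ℕ) = (j:ℕ) + 1 := by omega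
      simp [preinjBlockMat, h1, h2]
    · by_cases h2 : (i:ℕ) = (j:ℕ) + 1
      · simp [preinjBlockMat, h1, h2]
      · simp [preinjBlockMat, h1, h2]]
  rw [Finset.sum_add_distrib, sum_ite_eq_fin, sum_ite_succ_fin]


lemma neg_one_pow_pred {k : Type} [Field k] {t : ℕ} (ht : 0 < t) :
    (-1 : k) ^ t = -(-1 : k) ^ (t - 1) := by
  obtain ⟨s, rfl⟩ : ∃ s, t = s + 1 := ⟨t - 1, by omega⟩
  simp [pow_succ]

lemma mulVec_formula {k : Type} [Field k] {d1 d2 n : ℕ}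
    (Mα Mβ : Matrix (Fin d2) (Fin d1) k) (X : Matrix (Fin d1) (Fin n) k)
    (i : Fin (n + 1)) (r : Fin d2) :
    (preinjBlockMat d1 d2 Mα Mβ n).mulVec
        (fun jc => (-1 : k) ^ (jc.1 : ℕ) * X jc.2 jc.1) (i, r)
      = (if h : (i : ℕ) < n then (-1 : k) ^ (i : ℕ) * (Mβ * X) r ⟨i, h⟩ else 0)
        + (if h : 0 < (i : ℕ) ∧ (i : ℕ) - 1 < n then
            (-1 : k) ^ ((i : ℕ) - 1) * (Mα * X) r ⟨(i : ℕ) - 1, h.2⟩ else 0) := by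
  rw [blockMulVec_entry]
  congr 1
  · split_ifs with h
    · rw [Matrix.mul_apply, Finset.mul_sum]
      apply Finset.sum_congr rfl; intro c _
      simp only [Fin.val_mk]
      ring
    · rfl
  · split_ifs with h
    · rw [Matrix.mul_apply, Finset.mul_sum]
      apply Finset.sum_congr rfl; intro c _
      simp only [Fin.val_mk]
      ring
    · rfl


end Aux


/-- for a Kronecker representation `M = (M(α), M(β))` and `n ≥ 1`,
`dim Hom(I_n, M) = n d_1 - rank I_n(M)`. -/
theorem dim_hom_from_preinjective {k : Type} [Field k] (d1 d2 : ℕ)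
    (Mα Mβ : Matrix (Fin d2) (Fin d1) k) (n : ℕ) (hn : 1 ≤ n) :
    Module.finrank k (homFromPreinj d1 d2 n Mα Mβ)
      = n * d1 - (preinjBlockMat d1 d2 Mα Mβ n).rank := by
  classical
  -- the linear map sending a morphism `(X, Y)` to the sign-twisted vectorization of `X`
  let f : homFromPreinj d1 d2 n Mα Mβ →ₗ[k] (Fin n × Fin d1 → k) :=
    { toFun := fun p jc => (-1 : k) ^ (jc.1 : ℕ) * p.val.1 jc.2 jc.1
      map_add' := by
        rintro p q
        funext jc
        simp [Matrix.add_apply, mul_add]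
      map_smul' := by
        rintro c p
        funext jc
        simp [Matrix.smul_apply, smul_eq_mul]
        ring }
  have hinj : Function.Injective f := by
    rw [← LinearMap.ker_eq_bot]
    apply (Submodule.eq_bot_iff _).mpr
    rintro ⟨⟨X, Y⟩, hA, hBc⟩ hp
    rw [LinearMap.mem_ker] at hp
    have hne : ∀ t : ℕ, ((-1 : k) ^ t) ≠ 0 := fun t =>
      pow_ne_zero _ (neg_ne_zero.mpr one_ne_zero)
    have hX : X = 0 := by
      ext c j
      have h0 := congrFun hp (j, c)
      simp only [f, LinearMap.coe_mk, AddHom.coe_mk, Pi.zero_apply] at h0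
      have := (mul_eq_zero.mp h0).resolve_left (hne _)
      simpa using this
    have hY : Y = 0 := by
      ext r j'
      have lt : (j' : ℕ) < n := lt_of_lt_of_le j'.2 (Nat.sub_le n 1)
      have h2 := mulA_entry (k := k) Y r ⟨j', lt⟩
      rw [← hA, hX] at h2
      rw [dif_pos (by simpa using j'.2)] at h2
      simp only [Matrix.zero_mul, Matrix.zero_apply] at h2
      have : (⟨((⟨(j' : ℕ), lt⟩ : Fin n) : ℕ), by simpa using j'.2⟩ : Fin (n - 1)) = j' :=
        Fin.ext rfl
      rw [this] at h2
      simpa using h2.symm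
    apply Subtype.ext
    simp only [Submodule.coe_zero]
    rw [Prod.ext_iff]
    exact ⟨hX, hY⟩
  have hrange : LinearMap.range f = LinearMap.ker (preinjBlockMat d1 d2 Mα Mβ n).mulVecLin := by
    ext v
    constructor
    · rintro ⟨⟨⟨X, Y⟩, hA, hBc⟩, rfl⟩
      rw [LinearMap.mem_ker]
      funext ir
      obtain ⟨i, r⟩ := ir
      rw [Matrix.mulVecLin_apply]
      have : f ⟨⟨X, Y⟩, hA, hBc⟩ = fun jc => (-1 : k) ^ (jc.1 : ℕ) * X jc.2 jc.1 := rfl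
      rw [this, mulVec_formula, hA, hBc]
      by_cases h0 : (i : ℕ) = 0
      · rw [dif_pos (by omega), dif_neg (by omega)]
        rw [mulB_entry, dif_neg (by simp [h0])]
        simp
      · by_cases hn' : (i : ℕ) = n
        · rw [dif_neg (by omega), dif_pos ⟨by omega, by omega⟩]
          rw [mulA_entry, dif_neg (by simp only [Fin.val_mk]; omega)]
          simp
        · have hi1 : 0 < (i : ℕ) := by omega
          have hi2 : (i : ℕ) < n := by omega
          rw [dif_pos hi2, dif_pos ⟨hi1, by omega⟩]
          rw [mulB_entry, dif_pos ⟨by simpa using hi1, by simp only [Fin.val_mk]; omega⟩]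
          rw [mulA_entry, dif_pos (by simp only [Fin.val_mk]; omega)]
          have key : ∀ a b : Fin (n - 1), (a : ℕ) = (b : ℕ) →
              (-1 : k) ^ (i : ℕ) * Y r a + (-1 : k) ^ ((i : ℕ) - 1) * Y r b = 0 := by
            intro a b hab
            rw [Fin.ext hab, neg_one_pow_pred hi1]
            ring
          exact key _ _ (by simp)
    · intro hv
      rw [LinearMap.mem_ker] at hv
      set X : Matrix (Fin d1) (Fin n) k := fun c j => (-1 : k) ^ (j : ℕ) * v (j, c) with hXdef
      have hvX : v = fun jc => (-1 : k) ^ (jc.1 : ℕ) * X jc.2 jc.1 := by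
        funext jc
        simp only [hXdef]
        rw [← mul_assoc, ← pow_add, Even.neg_one_pow ⟨_, rfl⟩, one_mul]
      have hne : ∀ t : ℕ, ((-1 : k) ^ t) ≠ 0 := fun t =>
        pow_ne_zero _ (neg_ne_zero.mpr one_ne_zero)
      have E : ∀ (i : Fin (n + 1)) (r : Fin d2),
          (if h : (i : ℕ) < n then (-1 : k) ^ (i : ℕ) * (Mβ * X) r ⟨i, h⟩ else 0)
            + (if h : 0 < (i : ℕ) ∧ (i : ℕ) - 1 < n then
                (-1 : k) ^ ((i : ℕ) - 1) * (Mα * X) r ⟨(i : ℕ) - 1, h.2⟩ else 0) = 0 := by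
        intro i r
        have e0 := congrFun hv (i, r)
        rw [Matrix.mulVecLin_apply, hvX, mulVec_formula] at e0
        exact e0
      have lt1 : ∀ j' : Fin (n - 1), (j' : ℕ) < n := fun j' =>
        lt_of_lt_of_le j'.2 (Nat.sub_le n 1)
      set Y : Matrix (Fin d2) (Fin (n - 1)) k :=
        fun r j' => (Mα * X) r ⟨j', lt1 j'⟩ with hYdef
      have hA : Mα * X = Y * preinjA n := by
        ext r j
        rw [mulA_entry]
        split_ifs with h
        · show (Mα * X) r j = (Mα * X) r ⟨((⟨(j : ℕ), h⟩ : Fin (n - 1)) : ℕ), _⟩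
          rfl
        · have e := E ⟨n, lt_add_one n⟩ r
          simp only [Fin.val_mk] at e
          rw [dif_neg (by omega), dif_pos (by omega), zero_add] at e
          have h2 := (mul_eq_zero.mp e).resolve_left (hne _)
          rw [show j = (⟨n - 1, by omega⟩ : Fin n) from
            Fin.ext (by simp only [Fin.val_mk]; omega)]
          exact h2
      have hBc : Mβ * X = Y * preinjB n := by
        ext r j
        rw [mulB_entry]
        split_ifs with h
        · have e := E ⟨(j : ℕ), by omega⟩ r
          simp only [Fin.val_mk] at e
          rw [dif_pos j.2, dif_pos (by omega), neg_one_pow_pred h.1] at e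
          have h3 : (-1 : k) ^ ((j : ℕ) - 1) *
              ((Mα * X) r ⟨(j : ℕ) - 1, by omega⟩ - (Mβ * X) r ⟨(j : ℕ), j.2⟩) = 0 := by
            linear_combination e
          have h4 := (mul_eq_zero.mp h3).resolve_left (hne _)
          have h5 := (sub_eq_zero.mp h4).symm
          exact h5
        · have hj0 : (j : ℕ) = 0 := by
            have := j.2
            omega
          have e := E ⟨0, by omega⟩ r
          simp only [Fin.val_mk] at e
          rw [dif_pos (by omega), dif_neg (by omega), add_zero] at e
          have h2 := (mul_eq_zero.mp e).resolve_left (hne _)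
          rw [show j = (⟨0, by omega⟩ : Fin n) from
            Fin.ext (by simp only [Fin.val_mk]; omega)]
          exact h2
      refine ⟨⟨⟨X, Y⟩, hA, hBc⟩, ?_⟩
      exact hvX.symm
  have h1 : Module.finrank k (homFromPreinj d1 d2 n Mα Mβ)
      = Module.finrank k (LinearMap.ker (preinjBlockMat d1 d2 Mα Mβ n).mulVecLin) := by
    rw [← hrange]
    exact (LinearMap.finrank_range_of_inj hinj).symm
  have h2 := LinearMap.finrank_range_add_finrank_ker (preinjBlockMat d1 d2 Mα Mβ n).mulVecLin
  have h3 : Module.finrank k (Fin n × Fin d1 → k) = n * d1 := by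
    simp [Module.finrank_pi, mul_comm]
  rw [h1, Matrix.rank]
  rw [h3] at h2
  omega
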